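/- Let n ≥ 1 and let f_i : ℝ^d → ℝ (i = 1, …, n) be differentiable functions each with L-Lipschitz gradient, and set f := (1/n)·∑_{i=1}^n f_i. Then for all w, w̃ ∈ ℝ^d, (1/n)·∑_{i=1}^n ‖∇f_i(w) − ∇f_i(w̃) + ∇f(w̃)‖² ≤ 2‖∇f(w)‖² + 2L²‖w − w̃‖². -/

import Mathlib

open InnerProductSpace

private lemma grad_F {d n : ℕ} (f : Fin n → EuclideanSpace ℝ (Fin d) → ℝ)
    (hdiff : ∀ i, Differentiable ℝ (f i))
    (F : EuclideanSpace ℝ (Fin d) → ℝ) (hF : F = fun w => (1 / n : ℝ) * ∑ i, f i w)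
    (x : EuclideanSpace ℝ (Fin d)) :
    gradient F x = (1 / n : ℝ) • ∑ i, gradient (f i) x := by
  have hsum : DifferentiableAt ℝ (fun w => ∑ i, f i w) x :=
    DifferentiableAt.fun_sum fun i _ => (hdiff i).differentiableAt
  have h1 : fderiv ℝ F x = (1 / n : ℝ) • ∑ i, fderiv ℝ (f i) x := by
    rw [hF]
    rw [show (fun w => (1 / n : ℝ) * ∑ i, f i w) = fun w => (1 / n : ℝ) • ∑ i, f i w from rfl]
    rw [fderiv_fun_const_smul hsum, fderiv_fun_sum fun i _ => (hdiff i).differentiableAt]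
  simp only [gradient, h1, map_smul, map_sum]

theorem stmt_9 (d n : ℕ) (hn : 1 ≤ n) (L : ℝ) (hL : 0 ≤ L)
    (f : Fin n → EuclideanSpace ℝ (Fin d) → ℝ)
    (hdiff : ∀ i, Differentiable ℝ (f i))
    (hlip : ∀ i (w w' : EuclideanSpace ℝ (Fin d)),
      ‖gradient (f i) w - gradient (f i) w'‖ ≤ L * ‖w - w'‖)
    (F : EuclideanSpace ℝ (Fin d) → ℝ) (hF : F = fun w => (1 / n : ℝ) * ∑ i, f i w) :
    ∀ w wt : EuclideanSpace ℝ (Fin d),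
      (1 / n : ℝ) * ∑ i, ‖gradient (f i) w - gradient (f i) wt + gradient F wt‖ ^ 2 ≤
        2 * ‖gradient F w‖ ^ 2 + 2 * L ^ 2 * ‖w - wt‖ ^ 2 := by
  intro w wt
  have hn' : (0 : ℝ) < n := by exact_mod_cast hn
  set a : Fin n → EuclideanSpace ℝ (Fin d) := fun i => gradient (f i) w - gradient (f i) wt
    with ha
  set G := gradient F w
  set Gt := gradient F wt
  set m : EuclideanSpace ℝ (Fin d) := G - Gt with hm
  have hmean : m = (1 / n : ℝ) • ∑ i, a i := by
    show gradient F w - gradient F wt = _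
    rw [grad_F f hdiff F hF w, grad_F f hdiff F hF wt, ← smul_sub, ← Finset.sum_sub_distrib]
  have hsummean : ∑ i, a i = (n : ℝ) • m := by
    rw [hmean, smul_smul, mul_one_div, div_self hn'.ne', one_smul]
  -- variance identity
  have hvar : ∑ i, ‖a i - m‖ ^ 2 = (∑ i, ‖a i‖ ^ 2) - (n : ℝ) * ‖m‖ ^ 2 := by
    have expand : ∀ i, ‖a i - m‖ ^ 2
        = ‖a i‖ ^ 2 - 2 * inner ℝ (a i) m + ‖m‖ ^ 2 := fun i => by
      rw [@norm_sub_sq_real]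
    rw [Finset.sum_congr rfl fun i _ => expand i, Finset.sum_add_distrib,
      Finset.sum_sub_distrib, ← Finset.mul_sum, ← sum_inner, hsummean,
      real_inner_smul_left, real_inner_self_eq_norm_sq, Finset.sum_const,
      Finset.card_univ, Fintype.card_fin, nsmul_eq_mul]
    ring
  -- pointwise bound
  have hpt : ∀ i, ‖a i - m + G‖ ^ 2 ≤ 2 * ‖a i - m‖ ^ 2 + 2 * ‖G‖ ^ 2 := by
    intro i
    have h1 := norm_add_le (a i - m) G
    have h2 : (0:ℝ) ≤ ‖a i - m + G‖ := norm_nonneg _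
    nlinarith [mul_self_le_mul_self h2 h1, sq_nonneg (‖a i - m‖ - ‖G‖),
      norm_nonneg (a i - m), norm_nonneg G]
  have hrw : ∀ i, a i + Gt = a i - m + G := by intro i; rw [hm]; abel
  have hsumbound : ∑ i, ‖a i + Gt‖ ^ 2
      ≤ 2 * (∑ i, ‖a i‖ ^ 2) + 2 * (n : ℝ) * ‖G‖ ^ 2 := by
    calc ∑ i, ‖a i + Gt‖ ^ 2 = ∑ i, ‖a i - m + G‖ ^ 2 := by
          exact Finset.sum_congr rfl fun i _ => by rw [hrw]
      _ ≤ ∑ i, (2 * ‖a i - m‖ ^ 2 + 2 * ‖G‖ ^ 2) :=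
          Finset.sum_le_sum fun i _ => hpt i
      _ = 2 * (∑ i, ‖a i - m‖ ^ 2) + 2 * (n : ℝ) * ‖G‖ ^ 2 := by
          rw [Finset.sum_add_distrib, ← Finset.mul_sum]
          simp [Finset.card_univ]; ring
      _ ≤ 2 * (∑ i, ‖a i‖ ^ 2) + 2 * (n : ℝ) * ‖G‖ ^ 2 := by
          rw [hvar]; nlinarith [sq_nonneg ‖m‖]
  have hai : ∀ i, ‖a i‖ ^ 2 ≤ L ^ 2 * ‖w - wt‖ ^ 2 := fun i => by
    have := hlip i w wt
    nlinarith [norm_nonneg (a i), norm_nonneg (w - wt)]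
  have hsum2 : ∑ i, ‖a i‖ ^ 2 ≤ (n : ℝ) * (L ^ 2 * ‖w - wt‖ ^ 2) := by
    calc ∑ i, ‖a i‖ ^ 2 ≤ ∑ _i : Fin n, L ^ 2 * ‖w - wt‖ ^ 2 :=
          Finset.sum_le_sum fun i _ => hai i
      _ = (n : ℝ) * (L ^ 2 * ‖w - wt‖ ^ 2) := by simp [Finset.card_univ]
  have key : ∑ i, ‖a i + Gt‖ ^ 2 ≤ (n : ℝ) * (2 * ‖G‖ ^ 2 + 2 * L ^ 2 * ‖w - wt‖ ^ 2) := by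
    nlinarith
  calc (1 / n : ℝ) * ∑ i, ‖a i + Gt‖ ^ 2
      ≤ (1 / n : ℝ) * ((n : ℝ) * (2 * ‖G‖ ^ 2 + 2 * L ^ 2 * ‖w - wt‖ ^ 2)) := by
        apply mul_le_mul_of_nonneg_left key (by positivity)
    _ = 2 * ‖G‖ ^ 2 + 2 * L ^ 2 * ‖w - wt‖ ^ 2 := by
        field_simp
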